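/- Let P(w) be a C^1 family of N×N complex matrices, and let A(w), B(w) be C^1 families of invertible N×N matrices. If P is of principal type at w_0 (i.e., there exists a direction ν such that the map u ↦ ∂_ν P(w_0)u from ker P(w_0) to C^N/Ran P(w_0) is bijective), then the product A·P·B is of principal type at w_0. -/

import Mathlib

/-- `P` is of principal type at `w₀`: for some direction `ν`, the map
`u ↦ ∂_ν P(w₀) u` from `ker P(w₀)` to `ℂ^N / Ran P(w₀)` is bijective. -/
def IsPrincipalTypeAt {d N : ℕ}
    (P : (Fin d → ℝ) → ((Fin N → ℂ) →L[ℂ] (Fin N → ℂ))) (w₀ : Fin d → ℝ) : Prop :=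
  ∃ ν : Fin d → ℝ, Function.Bijective
    (fun u : LinearMap.ker (P w₀ : (Fin N → ℂ) →ₗ[ℂ] (Fin N → ℂ)) =>
      (Submodule.Quotient.mk (fderiv ℝ P w₀ ν u.1) :
        (Fin N → ℂ) ⧸ LinearMap.range (P w₀ : (Fin N → ℂ) →ₗ[ℂ] (Fin N → ℂ))))

/-- derivative of a pointwise composition of ℂ-linear-map valued functions, over ℝ -/
lemma clm_comp_hasFDerivAt' {E X : Type*} [NormedAddCommGroup E] [NormedSpace ℝ E]
    [NormedAddCommGroup X] [NormedSpace ℂ X]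
    {c d : E → (X →L[ℂ] X)} {c' d' : E →L[ℝ] (X →L[ℂ] X)} {x : E}
    (hc : HasFDerivAt c c' x) (hd : HasFDerivAt d d' x) :
    HasFDerivAt (fun y => (c y).comp (d y))
      (((((isBoundedBilinearMap_comp (𝕜 := ℂ) (E := X) (F := X) (G := X)).deriv
          (c x, d x)).restrictScalars ℝ)).comp (c'.prod d')) x := by
  exact (((isBoundedBilinearMap_comp (𝕜 := ℂ) (E := X) (F := X) (G := X)).hasFDerivAt
    (c x, d x)).restrictScalars ℝ).comp x (hc.prodMk hd)

theorem principal_type_invariant_under_invertible_factors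
    {d N : ℕ} (P A B : (Fin d → ℝ) → ((Fin N → ℂ) →L[ℂ] (Fin N → ℂ)))
    (w₀ : Fin d → ℝ)
    (hP : ContDiff ℝ 1 P) (hA : ContDiff ℝ 1 A) (hB : ContDiff ℝ 1 B)
    (hAinv : ∀ w, Function.Bijective (A w))
    (hBinv : ∀ w, Function.Bijective (B w))
    (h : IsPrincipalTypeAt P w₀) :
    IsPrincipalTypeAt (fun w => (A w).comp ((P w).comp (B w))) w₀ := by
  obtain ⟨ν, hbij⟩ := h
  refine ⟨ν, ?_⟩
  have hPd := (hP.differentiable one_ne_zero w₀).hasFDerivAt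
  have hAd := (hA.differentiable one_ne_zero w₀).hasFDerivAt
  have hBd := (hB.differentiable one_ne_zero w₀).hasFDerivAt
  set A₀ := A w₀ with hA₀
  set P₀ := P w₀ with hP₀
  set B₀ := B w₀ with hB₀
  set A' := fderiv ℝ A w₀
  set P' := fderiv ℝ P w₀
  set B' := fderiv ℝ B w₀
  have hg := clm_comp_hasFDerivAt' hPd hBd
  have hQ := clm_comp_hasFDerivAt' hAd hg
  have hfQ : ∀ u : Fin N → ℂ,
      fderiv ℝ (fun w => (A w).comp ((P w).comp (B w))) w₀ ν u
        = A₀ (P₀ (B' ν u)) + A₀ (P' ν (B₀ u)) + A' ν (P₀ (B₀ u)) := by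
    intro u
    rw [hQ.fderiv]
    simp [IsBoundedBilinearMap.deriv_apply, map_add]
    rfl
  -- membership in the range of Q₀
  have hmem : ∀ x : Fin N → ℂ,
      A₀ (P₀ x) ∈ LinearMap.range ((fun w => (A w).comp ((P w).comp (B w))) w₀ : (Fin N → ℂ) →ₗ[ℂ] (Fin N → ℂ)) := by
    intro x
    obtain ⟨v, hv⟩ := (hBinv w₀).surjective x
    exact ⟨v, by rw [← hv]; rfl⟩
  -- kernel characterization
  have hker : ∀ u : Fin N → ℂ,
      u ∈ LinearMap.ker ((fun w => (A w).comp ((P w).comp (B w))) w₀ : (Fin N → ℂ) →ₗ[ℂ] (Fin N → ℂ)) ↔ P₀ (B₀ u) = 0 := by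
    intro u
    constructor
    · intro hu
      have : A₀ (P₀ (B₀ u)) = 0 := hu
      have h0 : A₀ (0 : Fin N → ℂ) = 0 := map_zero _
      exact (hAinv w₀).injective (this.trans h0.symm)
    · intro hu
      show A₀ (P₀ (B₀ u)) = 0
      rw [hu, map_zero]
  -- key reduction: for u in the kernel, the class of the derivative is that of A₀ (P' ν (B₀ u))
  have key : ∀ u : Fin N → ℂ, P₀ (B₀ u) = 0 →
      (Submodule.Quotient.mk (fderiv ℝ (fun w => (A w).comp ((P w).comp (B w))) w₀ ν u) :
        (Fin N → ℂ) ⧸ LinearMap.range ((fun w => (A w).comp ((P w).comp (B w))) w₀ : (Fin N → ℂ) →ₗ[ℂ] (Fin N → ℂ)))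
        = Submodule.Quotient.mk (A₀ (P' ν (B₀ u))) := by
    intro u hu
    rw [Submodule.Quotient.eq]
    rw [hfQ u, hu, map_zero, add_zero]
    have : A₀ (P₀ (B' ν u)) + A₀ (P' ν (B₀ u)) - A₀ (P' ν (B₀ u)) = A₀ (P₀ (B' ν u)) := by
      abel
    rw [this]
    exact hmem _
  constructor
  · -- injectivity
    rintro ⟨u, hu⟩ ⟨v, hv⟩ huv
    simp only at huv
    have hu' := (hker u).mp hu
    have hv' := (hker v).mp hv
    rw [key u hu', key v hv', Submodule.Quotient.eq] at huv
    obtain ⟨z, hz⟩ := huv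
    have hz' : P' ν (B₀ u) - P' ν (B₀ v) = P₀ (B₀ z) := by
      apply (hAinv w₀).injective
      have : A₀ (P' ν (B₀ u) - P' ν (B₀ v)) = A₀ (P' ν (B₀ u)) - A₀ (P' ν (B₀ v)) :=
        map_sub _ _ _
      rw [this, ← hz]
      rfl
    have hBu : (B₀ u) ∈ LinearMap.ker (P₀ : (Fin N → ℂ) →ₗ[ℂ] (Fin N → ℂ)) := hu'
    have hBv : (B₀ v) ∈ LinearMap.ker (P₀ : (Fin N → ℂ) →ₗ[ℂ] (Fin N → ℂ)) := hv'
    have : (⟨B₀ u, hBu⟩ : LinearMap.ker (P₀ : (Fin N → ℂ) →ₗ[ℂ] (Fin N → ℂ))) = ⟨B₀ v, hBv⟩ := by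
      apply hbij.injective
      simp only
      rw [Submodule.Quotient.eq]
      exact ⟨B₀ z, hz'.symm⟩
    have hBuv : B₀ u = B₀ v := congrArg Subtype.val this
    exact Subtype.ext ((hBinv w₀).injective hBuv)
  · -- surjectivity
    intro q
    obtain ⟨x, rfl⟩ := Submodule.Quotient.mk_surjective _ q
    obtain ⟨y, hy⟩ := (hAinv w₀).surjective x
    obtain ⟨⟨v, hvker⟩, hv⟩ := hbij.surjective (Submodule.Quotient.mk y)
    simp only at hv
    rw [Submodule.Quotient.eq] at hv
    obtain ⟨z, hz⟩ := hv
    obtain ⟨u, hu⟩ := (hBinv w₀).surjective v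
    have huker : P₀ (B₀ u) = 0 := by rw [hu]; exact hvker
    refine ⟨⟨u, (hker u).mpr huker⟩, ?_⟩
    simp only
    rw [key u huker, Submodule.Quotient.eq, hu]
    have : A₀ (P' ν v) - x = A₀ (P₀ z) := by
      rw [← hy, ← map_sub, show P₀ z = _ from hz]
    rw [this]
    exact hmem _
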